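/- For every infinite cardinal μ there exists a simple graph G with vertex set of cardinality μ such that: (1) G has the extension property (is a random graph): for any two disjoint finite sets X, Y of vertices there is a vertex v ∉ X ∪ Y adjacent to every vertex of X and to no vertex of Y; (2) the chromatic number of G equals μ, i.e. G has a proper coloring with colors in a set of cardinality μ but no proper coloring with colors in a set of cardinality strictly less than μ; and (3) G contains no clique of cardinality ℵ₁. -/

import Mathlib

open Cardinal Ordinal
noncomputable section
namespace Stmt3Aux

abbrev T (μ : Cardinal) : Type := μ.ord.ToType

def NAdj {μ : Cardinal} (x y : T μ × T μ) : Prop :=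
  (x.2 < y.2 ∧ y.2 < y.1 ∧ y.1 < x.1) ∨ (y.2 < x.2 ∧ x.2 < x.1 ∧ x.1 < y.1)

variable (μ : Cardinal)

/-- Cumulative stage types. -/
def Cst : ℕ → Type
  | 0 => T μ × T μ
  | n+1 => Cst n ⊕ (List (Cst n) × List (Cst n))

/-- One step of the adjacency relation. -/
def Astep {X : Type} (R : X → X → Prop) :
    X ⊕ (List X × List X) → X ⊕ (List X × List X) → Prop
  | Sum.inl a, Sum.inl b => R a b
  | Sum.inl a, Sum.inr w => a ∈ w.1
  | Sum.inr w, Sum.inl a => a ∈ w.1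
  | Sum.inr _, Sum.inr _ => False

/-- Stage adjacency. -/
def A : (n : ℕ) → Cst μ n → Cst μ n → Prop
  | 0 => NAdj
  | n+1 => Astep (A n)

/-- New vertices at each stage. -/
def NewT : ℕ → Type
  | 0 => T μ × T μ
  | n+1 => List (Cst μ n) × List (Cst μ n)

/-- The vertex type. -/
def VT : Type := Σ n, NewT μ n

def vin : (v : VT μ) → Cst μ v.1
  | ⟨0, x⟩ => x
  | ⟨_+1, w⟩ => Sum.inr w

@[simp] lemma vin_zero (x : NewT μ 0) : vin μ ⟨0, x⟩ = x := rfl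
@[simp] lemma vin_succ (n : ℕ) (w : NewT μ (n+1)) : vin μ ⟨n+1, w⟩ = Sum.inr w := rfl

def liftTo {m n : ℕ} (h : m ≤ n) (x : Cst μ m) : Cst μ n :=
  Nat.leRecOn h (fun {k} (y : Cst μ k) => (Sum.inl y : Cst μ (k+1))) x

lemma liftTo_self {n : ℕ} (h : n ≤ n) (x : Cst μ n) : liftTo μ h x = x :=
  Nat.leRecOn_self x

lemma liftTo_succ {m n : ℕ} (h : m ≤ n) (h2 : m ≤ n+1) (x : Cst μ m) :
    liftTo μ h2 x = Sum.inl (liftTo μ h x) :=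
  Nat.leRecOn_succ h x

lemma liftTo_trans {m n k : ℕ} (h1 : m ≤ n) (h2 : n ≤ k) (h3 : m ≤ k) (x : Cst μ m) :
    liftTo μ h3 x = liftTo μ h2 (liftTo μ h1 x) :=
  Nat.leRecOn_trans h1 h2 x

lemma A_liftTo {m n : ℕ} (h : m ≤ n) (x y : Cst μ m) :
    A μ n (liftTo μ h x) (liftTo μ h y) ↔ A μ m x y := by
  induction n, h using Nat.le_induction with
  | base => rw [liftTo_self, liftTo_self]
  | succ n hmn ih =>
      rw [liftTo_succ μ hmn, liftTo_succ μ hmn]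
      exact ih

lemma A_symm : ∀ (n : ℕ) (x y : Cst μ n), A μ n x y → A μ n y x := by
  intro n
  induction n with
  | zero => exact fun x y h => h.symm
  | succ n ih =>
      rintro (a | w) (b | w') h
      · exact ih a b h
      · exact h
      · exact h
      · exact h.elim

lemma A_irrefl : ∀ (n : ℕ) (x : Cst μ n), ¬ A μ n x x := by
  intro n
  induction n with
  | zero =>
      rintro x (⟨h1, _, _⟩ | ⟨h1, _, _⟩) <;> exact lt_irrefl _ h1
  | succ n ih =>
      rintro (a | w) h
      · exact ih a h
      · exact h

/-- The graph adjacency on `VT`. -/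
def GAdj (u v : VT μ) : Prop :=
  ∃ (n : ℕ) (hu : u.1 ≤ n) (hv : v.1 ≤ n),
    A μ n (liftTo μ hu (vin μ u)) (liftTo μ hv (vin μ v))

lemma gadj_symm : Symmetric (GAdj μ) := by
  rintro u v ⟨n, hu, hv, h⟩
  exact ⟨n, hv, hu, A_symm μ n _ _ h⟩

lemma gadj_irrefl : Irreflexive (GAdj μ) := by
  rintro v ⟨n, hu, hv, h⟩
  exact A_irrefl μ n _ h

lemma gadj_at {u v : VT μ} {N : ℕ} (hu : u.1 ≤ N) (hv : v.1 ≤ N) :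
    GAdj μ u v ↔ A μ N (liftTo μ hu (vin μ u)) (liftTo μ hv (vin μ v)) := by
  constructor
  · rintro ⟨n, hun, hvn, h⟩
    have hnM : n ≤ max n N := le_max_left _ _
    have hNM : N ≤ max n N := le_max_right _ _
    have h2 : A μ (max n N) (liftTo μ (hun.trans hnM) (vin μ u))
        (liftTo μ (hvn.trans hnM) (vin μ v)) := by
      rw [liftTo_trans μ hun hnM, liftTo_trans μ hvn hnM]
      exact (A_liftTo μ hnM _ _).mpr h
    rw [liftTo_trans μ hu hNM (hun.trans hnM), liftTo_trans μ hv hNM (hvn.trans hnM)] at h2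
    exact (A_liftTo μ hNM _ _).mp h2
  · intro h; exact ⟨N, hu, hv, h⟩

lemma liftTo_inj {m n : ℕ} (h : m ≤ n) {x y : Cst μ m}
    (hxy : liftTo μ h x = liftTo μ h y) : x = y := by
  induction n, h using Nat.le_induction with
  | base => rwa [liftTo_self, liftTo_self] at hxy
  | succ n hmn ih =>
      rw [liftTo_succ μ hmn, liftTo_succ μ hmn] at hxy
      exact ih (Sum.inl_injective hxy)

lemma liftTo_vin_inj : ∀ (N : ℕ) (u v : VT μ) (hu : u.1 ≤ N) (hv : v.1 ≤ N),
    liftTo μ hu (vin μ u) = liftTo μ hv (vin μ v) → u = v := by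
  intro N
  induction N with
  | zero =>
      rintro ⟨nu, xu⟩ ⟨nv, xv⟩ hu hv h
      obtain rfl : nu = 0 := Nat.le_zero.mp hu
      obtain rfl : nv = 0 := Nat.le_zero.mp hv
      rw [liftTo_self, liftTo_self] at h
      simp only [vin_zero] at h
      exact congrArg _ h
  | succ N ih =>
      rintro ⟨nu, xu⟩ ⟨nv, xv⟩ hu hv h
      rcases Nat.lt_succ_iff_lt_or_eq.mp (Nat.lt_succ_of_le hu) with hu' | hu' <;>
        rcases Nat.lt_succ_iff_lt_or_eq.mp (Nat.lt_succ_of_le hv) with hv' | hv'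
      · have hu2 : nu ≤ N := Nat.lt_succ_iff.mp hu'
        have hv2 : nv ≤ N := Nat.lt_succ_iff.mp hv'
        rw [liftTo_succ μ hu2, liftTo_succ μ hv2] at h
        exact ih _ _ hu2 hv2 (Sum.inl_injective h)
      · subst hv'
        have hu2 : nu ≤ N := Nat.lt_succ_iff.mp hu'
        rw [liftTo_succ μ hu2, liftTo_self] at h
        simp only [vin_succ] at h
        exact absurd h (by simp)
      · subst hu'
        have hv2 : nv ≤ N := Nat.lt_succ_iff.mp hv'
        rw [liftTo_self, liftTo_succ μ hv2] at h
        simp only [vin_succ] at h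
        exact absurd h (by simp)
      · subst hu'; subst hv'
        rw [liftTo_self, liftTo_self] at h
        simp only [vin_succ] at h
        rw [Sum.inr_injective h]

lemma extension (X Y : Finset (VT μ)) (hXY : Disjoint X Y) :
    ∃ v : VT μ, v ∉ X ∧ v ∉ Y ∧ (∀ x ∈ X, GAdj μ v x) ∧ (∀ y ∈ Y, ¬ GAdj μ v y) := by
  classical
  set N := (X ∪ Y).sup (fun v => v.1) with hN
  have hmem : ∀ v ∈ X ∪ Y, v.1 ≤ N := fun v hv => Finset.le_sup hv
  set Xl : List (Cst μ N) := X.attach.toList.map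
      (fun x => liftTo μ (hmem x.1 (Finset.mem_union_left Y x.2)) (vin μ x.1)) with hXl
  set Yl : List (Cst μ N) := Y.attach.toList.map
      (fun y => liftTo μ (hmem y.1 (Finset.mem_union_right X y.2)) (vin μ y.1)) with hYl
  set w : VT μ := ⟨N+1, (Xl, Yl)⟩ with hw
  have hwX : w ∉ X := by
    intro h
    have := hmem w (Finset.mem_union_left Y h)
    simp [hw] at this
  have hwY : w ∉ Y := by
    intro h
    have := hmem w (Finset.mem_union_right X h)
    simp [hw] at this
  refine ⟨w, hwX, hwY, ?_, ?_⟩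
  · intro x hx
    have hxle : x.1 ≤ N := hmem x (Finset.mem_union_left Y hx)
    refine ⟨N+1, le_rfl, hxle.trans (Nat.le_succ N), ?_⟩
    rw [liftTo_self, liftTo_succ μ hxle]
    show Astep (A μ N) (Sum.inr (Xl, Yl)) (Sum.inl (liftTo μ hxle (vin μ x)))
    show liftTo μ hxle (vin μ x) ∈ Xl
    rw [hXl]
    refine List.mem_map.mpr ⟨⟨x, hx⟩, ?_, rfl⟩
    exact Finset.mem_toList.mpr (Finset.mem_attach X ⟨x, hx⟩)
  · intro y hy hadj
    have hyle : y.1 ≤ N := hmem y (Finset.mem_union_right X hy)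
    have h := (gadj_at μ (u := w) (v := y) le_rfl (hyle.trans (Nat.le_succ N))).mp hadj
    rw [liftTo_self, liftTo_succ μ hyle] at h
    have h2 : liftTo μ hyle (vin μ y) ∈ Xl := h
    rw [hXl] at h2
    obtain ⟨x, _, hx2⟩ := List.mem_map.mp h2
    have : (x : VT μ) = y := liftTo_vin_inj μ N x y _ _ hx2
    exact Finset.disjoint_left.mp hXY (this ▸ x.2) hy

lemma mk_Cst (hμ : ℵ₀ ≤ μ) : ∀ n, #(Cst μ n) = μ := by
  intro n
  induction n with
  | zero =>
      show #(T μ × T μ) = μ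
      simp only [mk_prod, Cardinal.lift_id, mk_ord_toType]
      exact mul_eq_self hμ
  | succ n ih =>
      show #(Cst μ n ⊕ (List (Cst μ n) × List (Cst μ n))) = μ
      have : Infinite (Cst μ n) := by
        rw [Cardinal.infinite_iff, ih]; exact hμ
      simp only [mk_sum, mk_prod, Cardinal.lift_id, mk_list_eq_mk, ih]
      rw [mul_eq_self hμ, add_eq_self hμ]

lemma mk_NewT (hμ : ℵ₀ ≤ μ) : ∀ n, #(NewT μ n) = μ := by
  intro n
  cases n with
  | zero =>
      show #(T μ × T μ) = μ
      simp only [mk_prod, Cardinal.lift_id, mk_ord_toType]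
      exact mul_eq_self hμ
  | succ n =>
      show #(List (Cst μ n) × List (Cst μ n)) = μ
      have : Infinite (Cst μ n) := by
        rw [Cardinal.infinite_iff, mk_Cst μ hμ]; exact hμ
      simp only [mk_prod, Cardinal.lift_id, mk_list_eq_mk, mk_Cst μ hμ]
      exact mul_eq_self hμ

lemma mk_VT (hμ : ℵ₀ ≤ μ) : #(VT μ) = μ := by
  show #(Σ n, NewT μ n) = μ
  rw [mk_sigma]
  have : (fun n => #(NewT μ n)) = fun _ : ℕ => μ := funext (fun n => mk_NewT μ hμ n)
  rw [this, sum_const]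
  simp only [Cardinal.lift_id, mk_nat]
  rw [mul_eq_max le_rfl hμ, max_eq_right hμ]

lemma nadj_clique_finite {ν : Cardinal} (S₀ : Set (T ν × T ν)) (h : S₀.Pairwise NAdj) :
    S₀.Finite := by
  rw [← Set.not_infinite]
  intro hinf
  classical
  have wf : WellFounded ((· < ·) : T ν → T ν → Prop) := IsWellFounded.wf
  have hsndinj : Set.InjOn Prod.snd S₀ := by
    intro x hx y hy hxy
    by_contra hne
    rcases h hx hy hne with ⟨h1, _, _⟩ | ⟨h1, _, _⟩
    · rw [hxy] at h1; exact lt_irrefl _ h1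
    · rw [hxy] at h1; exact lt_irrefl _ h1
  have hA : (Prod.snd '' S₀).Infinite := (Set.infinite_image_iff hsndinj).mpr hinf
  set step : {s : Set (T ν) // s.Infinite} → {s : Set (T ν) // s.Infinite} :=
    fun p => ⟨p.1 \ {wf.min p.1 p.2.nonempty}, p.2.diff (Set.finite_singleton _)⟩ with hstepdef
  set pack : ℕ → {s : Set (T ν) // s.Infinite} :=
    fun n => step^[n] ⟨Prod.snd '' S₀, hA⟩ with hpackdef
  set f : ℕ → T ν := fun n => wf.min (pack n).1 (pack n).2.nonempty with hfdef
  have hp0 : (pack 0).1 = Prod.snd '' S₀ := rfl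
  have hpsucc : ∀ n, (pack (n+1)).1 = (pack n).1 \ {f n} := by
    intro n
    show (step^[n+1] _).1 = _
    rw [Function.iterate_succ_apply']
  have hsub : ∀ m n, m ≤ n → (pack n).1 ⊆ (pack m).1 := by
    intro m n hmn
    induction n, hmn using Nat.le_induction with
    | base => exact subset_rfl
    | succ n hmn ih =>
        rw [hpsucc n]
        exact Set.diff_subset.trans ih
  have hmono : ∀ m n, m < n → f m < f n := by
    intro m n hmn
    have h1 : f n ∈ (pack n).1 := wf.min_mem _ _
    have h2 : f n ∈ (pack m).1 \ {f m} := by rw [← hpsucc m]; exact hsub _ _ hmn h1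
    have h3 : ¬ f n < f m := wf.not_lt_min _ h2.1
    have h4 : f n ≠ f m := by simpa using h2.2
    exact lt_of_le_of_ne (not_lt.mp h3) h4.symm
  have hfA : ∀ n, f n ∈ Prod.snd '' S₀ := by
    intro n
    rw [← hp0]
    exact hsub 0 n (Nat.zero_le n) (wf.min_mem _ _)
  choose x hxS hx2 using hfA
  have hxne : ∀ m n, m < n → x m ≠ x n := by
    intro m n hmn he
    have h5 := hmono m n hmn
    rw [← hx2 m, ← hx2 n, he] at h5
    exact lt_irrefl _ h5
  have hdec : ∀ n, (x (n+1)).1 < (x n).1 := by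
    intro n
    have hadj := h (hxS n) (hxS (n+1)) (hxne n (n+1) (Nat.lt_succ_self n))
    rcases hadj with ⟨h1, h2, h3⟩ | ⟨h1, h2, h3⟩
    · exact h3
    · exfalso
      have h6 : (x (n+1)).2 < (x n).2 := h1
      rw [hx2 n, hx2 (n+1)] at h6
      exact absurd (hmono n (n+1) (Nat.lt_succ_self n)) (asymm h6)
  set g : ℕ → T ν := fun n => (x n).1 with hgdef
  obtain ⟨k, hk⟩ := Set.mem_range.mp (wf.min_mem (Set.range g) ⟨g 0, Set.mem_range_self 0⟩)
  exact wf.not_lt_min (Set.range g) (Set.mem_range_self (k+1)) (by rw [← hk]; exact hdec k)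

def psi (S : Set (VT μ)) (u : ↥S) : (↥{x : T μ × T μ | (⟨0, x⟩ : VT μ) ∈ S}) ⊕ ℕ :=
  match u with
  | ⟨⟨0, x⟩, hu⟩ => Sum.inl ⟨x, hu⟩
  | ⟨⟨n+1, _⟩, _⟩ => Sum.inr n

lemma no_aleph1_clique (S : Set (VT μ)) (hS : S.Pairwise (GAdj μ))
    (hcard : #S = aleph 1) : False := by
  classical
  set S₀ : Set (T μ × T μ) := {x : T μ × T μ | (⟨0, x⟩ : VT μ) ∈ S} with hS₀
  have hpair : S₀.Pairwise NAdj := by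
    intro x hx y hy hne
    have hne' : (⟨0, x⟩ : VT μ) ≠ ⟨0, y⟩ := by
      intro he; exact hne (eq_of_heq (Sigma.mk.inj he).2)
    have hadj := hS hx hy hne'
    have h2 := (gadj_at μ (u := ⟨0, x⟩) (v := ⟨0, y⟩) (N := 0) le_rfl le_rfl).mp hadj
    rw [liftTo_self, liftTo_self] at h2
    exact h2
  have hfin : S₀.Finite := nadj_clique_finite S₀ hpair
  have huniq : ∀ n (w w' : NewT μ (n+1)), (⟨n+1, w⟩ : VT μ) ∈ S →
      (⟨n+1, w'⟩ : VT μ) ∈ S → w = w' := by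
    intro n w w' hw hw'
    by_contra hne
    have hne' : (⟨n+1, w⟩ : VT μ) ≠ ⟨n+1, w'⟩ := by
      intro he; exact hne (by simpa using he)
    have hadj := hS hw hw' hne'
    have h2 := (gadj_at μ (u := ⟨n+1, w⟩) (v := ⟨n+1, w'⟩) (N := n+1) le_rfl le_rfl).mp hadj
    rw [liftTo_self, liftTo_self] at h2
    exact h2
  have hψinj : Function.Injective (psi μ S) := by
    rintro ⟨⟨nu, xu⟩, hu⟩ ⟨⟨nv, xv⟩, hv⟩ he
    cases nu with
    | zero =>
        cases nv with
        | zero =>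
            have h3 : xu = xv := by
              have := Sum.inl_injective he
              exact congrArg Subtype.val this
            apply Subtype.ext
            show (⟨0, xu⟩ : VT μ) = ⟨0, xv⟩
            rw [h3]
        | succ m => exact absurd he (by simp [psi])
    | succ n =>
        cases nv with
        | zero => exact absurd he (by simp [psi])
        | succ m =>
            have h3 : n = m := by simpa [psi] using he
            subst h3
            apply Subtype.ext
            show (⟨n+1, xu⟩ : VT μ) = ⟨n+1, xv⟩
            rw [huniq n xu xv hu hv]
  have hle : #S ≤ ℵ₀ := by
    have h4 : #S ≤ #((↥S₀) ⊕ ℕ) := mk_le_of_injective hψinj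
    have h5 : #((↥S₀) ⊕ ℕ) ≤ ℵ₀ + ℵ₀ := by
      rw [mk_sum, Cardinal.lift_id, Cardinal.lift_id, mk_nat]
      haveI := hfin.countable.to_subtype
      exact add_le_add_left Cardinal.mk_le_aleph0 _
    exact h4.trans (h5.trans_eq (add_eq_self le_rfl))
  rw [hcard] at hle
  exact absurd hle (not_le.mpr aleph0_lt_aleph_one)

/-- Core chromatic lemma: a proper colouring of the nesting graph on a regular `κ`
needs at least `κ` colours. -/
lemma core (κ : Cardinal) (hreg : κ.IsRegular) (C : Type) (hC : #C < κ)
    (c : T κ × T κ → C)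
    (hc : ∀ a a' b' b : T κ, a < a' → a' < b' → b' < b → c (b, a) ≠ c (b', a')) : False := by
  classical
  have limord : Order.IsSuccLimit κ.ord := isSuccLimit_ord hreg.aleph0_le
  set I := Ordinal.ToType.mk (o := κ.ord) with hI
  set t : T κ → Ordinal := fun x => (I.symm x).1 with htdef
  have htlt : ∀ x, t x < κ.ord := fun x => (I.symm x).2
  have htmono : ∀ {x y : T κ}, t x < t y ↔ x < y := by
    intro x y
    exact (Subtype.coe_lt_coe).trans I.symm.lt_iff_lt
  have hstep : ∀ p : T κ, ∃ β : T κ, p < β ∧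
      ¬ ∃ q : T κ × T κ, p < q.2 ∧ q.2 < q.1 ∧ c q = c (β, p) := by
    intro p
    set f : {i : C // ∃ q : T κ × T κ, p < q.2 ∧ q.2 < q.1 ∧ c q = i} → Ordinal :=
      fun i => Order.succ (t (Classical.choose i.2).1) with hf
    have hflt : ∀ i, f i < κ.ord := fun i => limord.succ_lt (htlt _)
    have hcard : #{i : C // ∃ q : T κ × T κ, p < q.2 ∧ q.2 < q.1 ∧ c q = i} < κ.ord.cof := by
      rw [hreg.cof_eq]; exact lt_of_le_of_lt (mk_subtype_le _) hC
    have hsup : iSup f < κ.ord := Ordinal.iSup_lt_ord hcard hflt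
    set o : Ordinal := max (iSup f) (Order.succ (t p)) with ho
    have holt : o < κ.ord := max_lt hsup (limord.succ_lt (htlt p))
    set β : T κ := I ⟨o, holt⟩ with hβ
    have htβ : t β = o := by
      show (I.symm (I ⟨o, holt⟩)).1 = o
      rw [OrderIso.symm_apply_apply]
    have hpβ : p < β := by
      rw [← htmono, htβ]
      exact lt_of_lt_of_le (Order.lt_succ (t p)) (le_max_right _ _)
    refine ⟨β, hpβ, ?_⟩
    intro hEx
    obtain ⟨h1, h2, h3⟩ := Classical.choose_spec hEx
    have hle : f ⟨c (β, p), hEx⟩ ≤ iSup f := le_ciSup (Ordinal.bddAbove_range f) _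
    have hq1 : t (Classical.choose hEx).1 < o :=
      lt_of_lt_of_le (lt_of_lt_of_le (Order.lt_succ _) hle) (le_max_left _ _)
    have hlt : (Classical.choose hEx).1 < β := htmono.mp (by rw [htβ]; exact hq1)
    exact hc p (Classical.choose hEx).2 (Classical.choose hEx).1 β h1 h2 hlt h3.symm
  choose β hβlt hβgood using hstep
  have hinj : Function.Injective (fun p : T κ => c (β p, p)) := by
    intro p q hpq
    by_contra hne
    rcases lt_or_gt_of_ne hne with h | h
    · exact hβgood p ⟨(β q, q), h, hβlt q, hpq.symm⟩
    · exact hβgood q ⟨(β p, p), h, hβlt p, hpq⟩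
  have hκC : κ ≤ #C := by
    calc κ = #(T κ) := (mk_ord_toType κ).symm
    _ ≤ #C := mk_le_of_injective hinj
  exact absurd hC (not_lt.mpr hκC)


lemma no_small (hμ : ℵ₀ ≤ μ) (C : Type) (c : VT μ → C) (hC : #C < μ)
    (hc : ∀ x y : VT μ, GAdj μ x y → c x ≠ c y) : False := by
  classical
  obtain ⟨κ, hreg, hCκ, hκμ⟩ : ∃ κ : Cardinal, κ.IsRegular ∧ #C < κ ∧ κ ≤ μ := by
    rcases eq_or_lt_of_le hμ with h | h
    · exact ⟨ℵ₀, isRegular_aleph0, h ▸ hC, h.le⟩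
    · refine ⟨Order.succ (max #C ℵ₀), isRegular_succ (le_max_right _ _), ?_, ?_⟩
      · exact lt_of_le_of_lt (le_max_left _ _) (Order.lt_succ _)
      · exact Order.succ_le_of_lt (max_lt hC h)
  have hord : κ.ord ≤ μ.ord := ord_le_ord.mpr hκμ
  set j : T κ → T μ := fun x =>
    (Ordinal.ToType.mk (o := μ.ord)) ⟨((Ordinal.ToType.mk (o := κ.ord)).symm x).1,
      Set.mem_Iio.mpr (lt_of_lt_of_le (Set.mem_Iio.mp ((Ordinal.ToType.mk (o := κ.ord)).symm x).2) hord)⟩ with hj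
  have hjmono : ∀ {a b : T κ}, a < b → j a < j b := by
    intro a b hab
    apply (OrderIso.lt_iff_lt _).mpr
    exact Subtype.mk_lt_mk.mpr (Subtype.coe_lt_coe.mpr ((OrderIso.lt_iff_lt _).mpr hab))
  set c0 : T κ × T κ → C := fun q => c ⟨0, (j q.1, j q.2)⟩ with hc0
  have hproper : ∀ a a' b' b : T κ, a < a' → a' < b' → b' < b → c0 (b, a) ≠ c0 (b', a') := by
    intro a a' b' b h1 h2 h3
    apply hc
    refine ⟨0, le_rfl, le_rfl, ?_⟩
    rw [liftTo_self, liftTo_self]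
    exact Or.inl ⟨hjmono h1, hjmono h2, hjmono h3⟩
  exact core κ hreg C hCκ c0 hproper

end Stmt3Aux

theorem stmt_3 (μ : Cardinal) (hμ : ℵ₀ ≤ μ) :
    ∃ (V : Type) (G : SimpleGraph V), #V = μ ∧
      (∀ X Y : Finset V, Disjoint X Y →
        ∃ v : V, v ∉ X ∧ v ∉ Y ∧ (∀ x ∈ X, G.Adj v x) ∧ (∀ y ∈ Y, ¬ G.Adj v y)) ∧
      (∃ (C : Type) (c : V → C), #C = μ ∧ ∀ x y : V, G.Adj x y → c x ≠ c y) ∧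
      (¬ ∃ (C : Type) (c : V → C), #C < μ ∧ ∀ x y : V, G.Adj x y → c x ≠ c y) ∧
      (¬ ∃ S : Set V, S.Pairwise G.Adj ∧ #S = aleph 1) := by
  classical
  refine ⟨Stmt3Aux.VT μ, ⟨Stmt3Aux.GAdj μ, ⟨fun _ _ h => Stmt3Aux.gadj_symm μ h⟩, ⟨Stmt3Aux.gadj_irrefl μ⟩⟩,
    Stmt3Aux.mk_VT μ hμ, ?_, ?_, ?_, ?_⟩
  · intro X Y hXY
    exact Stmt3Aux.extension μ X Y hXY
  · refine ⟨Stmt3Aux.VT μ, id, Stmt3Aux.mk_VT μ hμ, ?_⟩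
    intro x y h hxy
    have hxy' : x = y := hxy
    subst hxy'
    exact Stmt3Aux.gadj_irrefl μ x h
  · rintro ⟨C, c, hC, hc⟩
    exact Stmt3Aux.no_small μ hμ C c hC hc
  · rintro ⟨S, hS, hcard⟩
    exact Stmt3Aux.no_aleph1_clique μ S hS hcard
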